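/- For every t ≥ 1 and every client k, the local and centralized iterates satisfy the one-step divergence bound ‖w^k_t − w^c_t‖ ≤ a^k · ‖w^k_{t−1} − w^c_{t−1}‖ + η · (Σ_{i=1}^C |p^k_i − p_i|) · g_max(w^c_{t−1}). -/

import Mathlib

/-- `g_max(w) = max_{1 ≤ i ≤ C} ‖G_i(w)‖`. -/
noncomputable def gmax {W : Type*} [NormedAddCommGroup W] {C : ℕ} (hC : 0 < C)
    (G : Fin C → W → W) (w : W) : ℝ :=
  Finset.univ.sup' (Finset.univ_nonempty_iff.mpr ⟨⟨0, hC⟩⟩) fun i => ‖G i w‖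

/-- One-step divergence bound between the local SGD iterates of client `k`
and the centralized SGD iterates:
`‖w^k_t − w^c_t‖ ≤ a^k ‖w^k_{t−1} − w^c_{t−1}‖ + η (Σ_i |p^k_i − p_i|) g_max(w^c_{t−1})`
for every `t ≥ 1`. -/
theorem one_step_weight_divergence_bound
    {W : Type*} [NormedAddCommGroup W] [NormedSpace ℝ W]
    {C : ℕ} (hC : 0 < C)
    (G : Fin C → W → W) (lam : Fin C → ℝ) (hlam : ∀ i, 0 ≤ lam i)
    (hG : ∀ i (u v : W), ‖G i u - G i v‖ ≤ lam i * ‖u - v‖)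
    (η : ℝ) (hη : 0 < η)
    (p : Fin C → ℝ) (hp : ∀ i, 0 ≤ p i) (hpsum : ∑ i, p i = 1)
    (pk : Fin C → ℝ) (hpk : ∀ i, 0 ≤ pk i) (hpksum : ∑ i, pk i = 1)
    (wc wk : ℕ → W)
    (hwc : ∀ t : ℕ, 1 ≤ t → wc t = wc (t - 1) - η • ∑ i, p i • G i (wc (t - 1)))
    (hwk : ∀ t : ℕ, 1 ≤ t → wk t = wk (t - 1) - η • ∑ i, pk i • G i (wk (t - 1)))
    (t : ℕ) (ht : 1 ≤ t) :
    ‖wk t - wc t‖ ≤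
      (1 + η * ∑ i, pk i * lam i) * ‖wk (t - 1) - wc (t - 1)‖ +
        η * (∑ i, |pk i - p i|) * gmax hC G (wc (t - 1)) := by
  set u := wk (t - 1)
  set v := wc (t - 1)
  have key : wk t - wc t =
      (u - v) - η • (∑ i, pk i • (G i u - G i v)) - η • (∑ i, (pk i - p i) • G i v) := by
    rw [hwk t ht, hwc t ht]
    simp only [smul_sub, sub_smul, Finset.sum_sub_distrib, smul_sub]
    abel
  have hgmax : ∀ i, ‖G i v‖ ≤ gmax hC G v := fun i =>
    Finset.le_sup' (fun i => ‖G i v‖) (Finset.mem_univ i)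
  have h1 : ‖η • (∑ i, pk i • (G i u - G i v))‖ ≤ η * (∑ i, pk i * lam i) * ‖u - v‖ := by
    rw [norm_smul, Real.norm_eq_abs, abs_of_pos hη, mul_assoc]
    refine mul_le_mul_of_nonneg_left ?_ hη.le
    calc ‖∑ i, pk i • (G i u - G i v)‖ ≤ ∑ i, ‖pk i • (G i u - G i v)‖ :=
          norm_sum_le _ _
      _ ≤ ∑ i, pk i * lam i * ‖u - v‖ := by
          refine Finset.sum_le_sum fun i _ => ?_
          rw [norm_smul, Real.norm_eq_abs, abs_of_nonneg (hpk i), mul_assoc]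
          exact mul_le_mul_of_nonneg_left (hG i u v) (hpk i)
      _ = (∑ i, pk i * lam i) * ‖u - v‖ := by rw [Finset.sum_mul]
  have h2 : ‖η • (∑ i, (pk i - p i) • G i v)‖ ≤ η * (∑ i, |pk i - p i|) * gmax hC G v := by
    rw [norm_smul, Real.norm_eq_abs, abs_of_pos hη, mul_assoc]
    refine mul_le_mul_of_nonneg_left ?_ hη.le
    calc ‖∑ i, (pk i - p i) • G i v‖ ≤ ∑ i, ‖(pk i - p i) • G i v‖ := norm_sum_le _ _
      _ ≤ ∑ i, |pk i - p i| * gmax hC G v := by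
          refine Finset.sum_le_sum fun i _ => ?_
          rw [norm_smul, Real.norm_eq_abs]
          exact mul_le_mul_of_nonneg_left (hgmax i) (abs_nonneg _)
      _ = (∑ i, |pk i - p i|) * gmax hC G v := by rw [Finset.sum_mul]
  calc ‖wk t - wc t‖
      ≤ ‖u - v‖ + ‖η • (∑ i, pk i • (G i u - G i v))‖ + ‖η • (∑ i, (pk i - p i) • G i v)‖ := by
        rw [key]
        exact le_trans (norm_sub_le _ _) (add_le_add_left (norm_sub_le _ _) _)
    _ ≤ ‖u - v‖ + η * (∑ i, pk i * lam i) * ‖u - v‖ + η * (∑ i, |pk i - p i|) * gmax hC G v :=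
        add_le_add (add_le_add_right h1 _) h2
    _ = (1 + η * ∑ i, pk i * lam i) * ‖u - v‖ + η * (∑ i, |pk i - p i|) * gmax hC G v := by ring
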